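/- For every 1 ≤ k ≤ K one has the identity P̄_k|h_k|² − η̃_k = (√(P̄_k)|h_k| + √(η̃_k)) · J(k)/S_k; equivalently, √(P̄_k)|h_k| − √(η̃_k) = J(k)/S_k. In particular, P̄_k|h_k|² − η̃_k and J(k) have the same sign. (identity (43) in the proof of Lemma 4) -/
import Mathlib


/-- **identity (43) in the proof of Lemma 4.** For every `1 ≤ k ≤ K`:
`P̄_k|h_k|² − η̃_k = (√(P̄_k)|h_k| + √(η̃_k)) · J(k)/S_k`, equivalently
`√(P̄_k)|h_k| − √(η̃_k) = J(k)/S_k`; in particular `P̄_k|h_k|² − η̃_k` and `J(k)`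
have the same sign. -/
theorem stmt6
    (K : ℕ) (hK : 1 ≤ K) (P h : ℕ → ℝ) (σ2 : ℝ)
    (hP : ∀ k, 1 ≤ k → k ≤ K → 0 < P k)
    (hh : ∀ k, 1 ≤ k → k ≤ K → 0 < h k)
    (hσ2 : 0 < σ2)
    (hord : ∀ k, 1 ≤ k → k < K → P k * (h k) ^ 2 ≤ P (k + 1) * (h (k + 1)) ^ 2)
    (S ηt J : ℕ → ℝ)
    (hS : ∀ k, S k = ∑ i ∈ Finset.Icc 1 k, Real.sqrt (P i) * h i)
    (hηt : ∀ k, ηt k = ((σ2 + ∑ i ∈ Finset.Icc 1 k, P i * (h i) ^ 2) / S k) ^ 2)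
    (hJ : ∀ k, J k = (∑ i ∈ Finset.Icc 1 (k - 1),
      Real.sqrt (P i) * h i * (Real.sqrt (P k) * h k - Real.sqrt (P i) * h i)) - σ2) :
    ∀ k, 1 ≤ k → k ≤ K →
      (P k * (h k) ^ 2 - ηt k
          = (Real.sqrt (P k) * h k + Real.sqrt (ηt k)) * (J k / S k)) ∧
      (Real.sqrt (P k) * h k - Real.sqrt (ηt k) = J k / S k) ∧
      (0 ≤ P k * (h k) ^ 2 - ηt k ↔ 0 ≤ J k) := by
  intro k hk1 hkK
  have hSpos : 0 < S k := by
    rw [hS]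
    apply Finset.sum_pos
    · intro i hi
      simp only [Finset.mem_Icc] at hi
      exact mul_pos (Real.sqrt_pos.mpr (hP i hi.1 (hi.2.trans hkK)))
        (hh i hi.1 (hi.2.trans hkK))
    · exact Finset.nonempty_Icc.mpr hk1
  have hapos : 0 < Real.sqrt (P k) * h k :=
    mul_pos (Real.sqrt_pos.mpr (hP k hk1 hkK)) (hh k hk1 hkK)
  set a := Real.sqrt (P k) * h k with ha
  have hA : 0 < σ2 + ∑ i ∈ Finset.Icc 1 k, P i * (h i) ^ 2 := by
    have : (0:ℝ) ≤ ∑ i ∈ Finset.Icc 1 k, P i * (h i) ^ 2 := by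
      apply Finset.sum_nonneg
      intro i hi
      simp only [Finset.mem_Icc] at hi
      exact le_of_lt (mul_pos (hP i hi.1 (hi.2.trans hkK))
        (pow_pos (hh i hi.1 (hi.2.trans hkK)) 2))
    linarith
  set A := σ2 + ∑ i ∈ Finset.Icc 1 k, P i * (h i) ^ 2 with hAdef
  have hsqrtη : Real.sqrt (ηt k) = A / S k := by
    rw [hηt, ← hAdef, Real.sqrt_sq (by positivity)]
  have hk' : k - 1 + 1 = k := Nat.succ_pred_eq_of_pos hk1
  have hsum1 : ∑ i ∈ Finset.Icc 1 k, Real.sqrt (P i) * h i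
      = (∑ i ∈ Finset.Icc 1 (k - 1), Real.sqrt (P i) * h i) + a := by
    conv_lhs => rw [← hk']
    rw [Finset.sum_Icc_succ_top (by omega), hk', ha]
  have hsum2 : ∑ i ∈ Finset.Icc 1 k, P i * (h i) ^ 2
      = (∑ i ∈ Finset.Icc 1 (k - 1), P i * (h i) ^ 2) + P k * (h k) ^ 2 := by
    conv_lhs => rw [← hk']
    rw [Finset.sum_Icc_succ_top (by omega), hk']
  have ha2 : a ^ 2 = P k * (h k) ^ 2 := by
    rw [ha, mul_pow, Real.sq_sqrt (hP k hk1 hkK).le]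
  have hkey : J k = a * S k - A := by
    rw [hJ]
    have hterm : ∀ i ∈ Finset.Icc 1 (k - 1),
        Real.sqrt (P i) * h i * (a - Real.sqrt (P i) * h i)
          = a * (Real.sqrt (P i) * h i) - P i * (h i) ^ 2 := by
      intro i hi
      simp only [Finset.mem_Icc] at hi
      have hiK : i ≤ K := by omega
      have hs : Real.sqrt (P i) ^ 2 = P i := Real.sq_sqrt (hP i hi.1 hiK).le
      have : Real.sqrt (P i) * h i * (a - Real.sqrt (P i) * h i)
          = a * (Real.sqrt (P i) * h i) - Real.sqrt (P i) ^ 2 * (h i) ^ 2 := by ring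
      rw [this, hs]
    rw [Finset.sum_congr rfl hterm, Finset.sum_sub_distrib, ← Finset.mul_sum,
      hS, hsum1, hAdef, hsum2]
    ring_nf
    nlinarith [ha2]
  have hc2 : a - Real.sqrt (ηt k) = J k / S k := by
    rw [hsqrtη, hkey]
    field_simp
  have hb2 : Real.sqrt (ηt k) ^ 2 = ηt k := by
    apply Real.sq_sqrt
    rw [hηt]; positivity
  have hc1 : P k * (h k) ^ 2 - ηt k = (a + Real.sqrt (ηt k)) * (J k / S k) := by
    rw [← hc2]
    linear_combination hb2 - ha2
  refine ⟨hc1, hc2, ?_⟩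
  rw [hc1]
  have hcpos : 0 < (a + Real.sqrt (ηt k)) / S k :=
    div_pos (add_pos_of_pos_of_nonneg hapos (Real.sqrt_nonneg _)) hSpos
  have heq : (a + Real.sqrt (ηt k)) * (J k / S k)
      = ((a + Real.sqrt (ηt k)) / S k) * J k := by ring
  rw [heq]
  exact mul_nonneg_iff_of_pos_left hcpos
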